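/- (Moment condition underlying the HetroGMM estimator of the first moment) Under the stated assumptions, for every t ∈ ℤ, E(φ) · (E((Δy_t)²) + E(Δy_t Δy_{t−1})) = E((Δy_t)²) + 2 E(Δy_t Δy_{t−1}) + E(Δy_t Δy_{t−2}). -/

import Mathlib

open MeasureTheory ProbabilityTheory Filter

/-- Index type for the joint independence assumption: `none` indexes the pair of
random coefficients `(φ, σ)` and `some ℓ` indexes the standardized error `ε_ℓ`. -/
abbrev HetAR1.Codomain : Option ℤ → Type
  | none => ℝ × ℝ
  | some _ => ℝ

instance HetAR1.instMeasurableSpaceCodomain : ∀ i, MeasurableSpace (HetAR1.Codomain i)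
  | none => inferInstanceAs (MeasurableSpace (ℝ × ℝ))
  | some _ => inferInstanceAs (MeasurableSpace ℝ)

/-- The family consisting of the pair `(φ, σ)` together with all the errors `ε_ℓ`. -/
def HetAR1.family {Ω : Type*} (φ σ : Ω → ℝ) (ε : ℤ → Ω → ℝ) :
    ∀ i : Option ℤ, Ω → HetAR1.Codomain i
  | none => fun ω => (φ ω, σ ω)
  | some ℓ => ε ℓ

namespace HetAR1Aux

/-- MA coefficients: `b 0 x = 1`, `b (ℓ+1) x = -((1-x) * x^ℓ)`. -/
def b : ℕ → ℝ → ℝ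
  | 0 => fun _ => 1
  | (ℓ+1) => fun x => -((1 - x) * x ^ ℓ)

lemma measurable_b (ℓ : ℕ) : Measurable (b ℓ) := by
  cases ℓ with
  | zero => simp only [b]; exact measurable_const
  | succ n => exact (((measurable_const.sub measurable_id).mul (measurable_id.pow_const n)).neg)

lemma b_bound {x : ℝ} (hx1 : -1 ≤ x) (hx2 : x ≤ 1) (ℓ : ℕ) : |b ℓ x| ≤ 2 := by
  cases ℓ with
  | zero => norm_num [b]
  | succ n =>
    have hxabs : |x| ≤ 1 := abs_le.2 ⟨hx1, hx2⟩
    have h1 : |1 - x| ≤ 2 := by rw [abs_le]; constructor <;> linarith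
    have h2 : |x ^ n| ≤ 1 := by
      rw [abs_pow]; exact pow_le_one₀ (abs_nonneg x) hxabs
    calc |b (n+1) x| = |1 - x| * |x ^ n| := by
          rw [show b (n+1) x = -((1-x) * x^n) from rfl, abs_neg, abs_mul]
      _ ≤ 2 * 1 := mul_le_mul h1 h2 (abs_nonneg _) (by norm_num)
      _ = 2 := by norm_num

lemma key1 (x : ℝ) (N : ℕ) :
    (∑ k ∈ Finset.range (N+3), b k x * b k x)
      + (∑ k ∈ Finset.range (N+2), b (k+1) x * b k x)
      = 1 - (1-x) * x^(2*N+3) := by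
  induction N with
  | zero =>
    simp only [Finset.sum_range_succ, Finset.sum_range_zero,
      show b 0 x = 1 from rfl, show b 1 x = -((1-x)*x^0) from rfl,
      show b 2 x = -((1-x)*x^1) from rfl]
    ring
  | succ n ih =>
    have e1 : ∑ k ∈ Finset.range (n+1+3), b k x * b k x
        = (∑ k ∈ Finset.range (n+3), b k x * b k x) + b (n+3) x * b (n+3) x := by
      rw [show n+1+3 = (n+3)+1 by ring, Finset.sum_range_succ]
    have e2 : ∑ k ∈ Finset.range (n+1+2), b (k+1) x * b k x
        = (∑ k ∈ Finset.range (n+2), b (k+1) x * b k x) + b (n+3) x * b (n+2) x := by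
      rw [show n+1+2 = (n+2)+1 by ring, Finset.sum_range_succ]
    rw [e1, e2, show b (n+3) x = -((1-x)*x^(n+2)) from rfl,
      show b (n+2) x = -((1-x)*x^(n+1)) from rfl]
    linear_combination ih

lemma key2 (x : ℝ) (N : ℕ) :
    (∑ k ∈ Finset.range (N+3), b k x * b k x)
      + 2 * (∑ k ∈ Finset.range (N+2), b (k+1) x * b k x)
      + (∑ k ∈ Finset.range (N+1), b (k+2) x * b k x)
      = x - (1-x)*(1+x)*x^(2*N+2) := by
  induction N with
  | zero =>
    simp only [Finset.sum_range_succ, Finset.sum_range_zero,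
      show b 0 x = 1 from rfl, show b 1 x = -((1-x)*x^0) from rfl,
      show b 2 x = -((1-x)*x^1) from rfl]
    ring
  | succ n ih =>
    have e1 : ∑ k ∈ Finset.range (n+1+3), b k x * b k x
        = (∑ k ∈ Finset.range (n+3), b k x * b k x) + b (n+3) x * b (n+3) x := by
      rw [show n+1+3 = (n+3)+1 by ring, Finset.sum_range_succ]
    have e2 : ∑ k ∈ Finset.range (n+1+2), b (k+1) x * b k x
        = (∑ k ∈ Finset.range (n+2), b (k+1) x * b k x) + b (n+3) x * b (n+2) x := by
      rw [show n+1+2 = (n+2)+1 by ring, Finset.sum_range_succ]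
    have e3 : ∑ k ∈ Finset.range (n+1+1), b (k+2) x * b k x
        = (∑ k ∈ Finset.range (n+1), b (k+2) x * b k x) + b (n+3) x * b (n+1) x := by
      rw [show n+1+1 = (n+1)+1 by ring, Finset.sum_range_succ]
    rw [e1, e2, e3, show b (n+3) x = -((1-x)*x^(n+2)) from rfl,
      show b (n+2) x = -((1-x)*x^(n+1)) from rfl]
    rcases n with _ | m
    · rw [show b 1 x = -((1-x)*x^0) from rfl]
      linear_combination ih
    · rw [show b (m+1+1) x = -((1-x)*x^(m+1)) from rfl]
      linear_combination ih


lemma iIndepFun_congr_ae {Ω : Type*} [MeasurableSpace Ω] {P : Measure Ω}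
    {ι : Type*} [Countable ι] {β : ι → Type*} {m : ∀ i, MeasurableSpace (β i)}
    {f g : ∀ i, Ω → β i} (hf : iIndepFun (m := m) f P) (h : ∀ i, f i =ᵐ[P] g i) :
    iIndepFun (m := m) g P := by
  rw [iIndepFun_iff_measure_inter_preimage_eq_mul] at hf ⊢
  intro S sets H
  have hae : ∀ᵐ ω ∂P, ∀ i ∈ S, f i ω = g i ω :=
    (ae_ball_iff S.countable_toSet).2 fun i _ => h i
  have h1 : ∀ i ∈ S, P (g i ⁻¹' sets i) = P (f i ⁻¹' sets i) := by
    intro i hi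
    refine measure_congr ?_
    filter_upwards [h i] with ω hω
    show (g i ω ∈ sets i) = (f i ω ∈ sets i)
    rw [hω]
  have h2 : P (⋂ i ∈ S, g i ⁻¹' sets i) = P (⋂ i ∈ S, f i ⁻¹' sets i) := by
    refine measure_congr ?_
    filter_upwards [hae] with ω hω
    show (ω ∈ ⋂ i ∈ S, g i ⁻¹' sets i) = (ω ∈ ⋂ i ∈ S, f i ⁻¹' sets i)
    simp only [Set.mem_iInter, Set.mem_preimage, eq_iff_iff]
    constructor
    · intro hx i hi; rw [hω i hi]; exact hx i hi
    · intro hx i hi; rw [← hω i hi]; exact hx i hi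
  rw [h2, hf S H]
  exact (Finset.prod_congr rfl h1).symm

lemma tendsto_integral_mul_of_L2 {Ω : Type*} [MeasurableSpace Ω] {P : Measure Ω}
    [IsProbabilityMeasure P] {X Y : Ω → ℝ} {Xn Yn : ℕ → Ω → ℝ}
    (hX : MemLp X 2 P) (hY : MemLp Y 2 P)
    (hXn : ∀ n, MemLp (Xn n) 2 P) (hYn : ∀ n, MemLp (Yn n) 2 P)
    (hXc : Tendsto (fun n => eLpNorm (fun ω => Xn n ω - X ω) 2 P) atTop (nhds 0))
    (hYc : Tendsto (fun n => eLpNorm (fun ω => Yn n ω - Y ω) 2 P) atTop (nhds 0)) :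
    Tendsto (fun n => ∫ ω, Xn n ω * Yn n ω ∂P) atTop (nhds (∫ ω, X ω * Y ω ∂P)) := by
  have key : ∀ (Z : Ω → ℝ) (Zn : ℕ → Ω → ℝ) (hZ : MemLp Z 2 P) (hZn : ∀ n, MemLp (Zn n) 2 P),
      Tendsto (fun n => eLpNorm (fun ω => Zn n ω - Z ω) 2 P) atTop (nhds 0) →
      Tendsto (fun n => (hZn n).toLp (Zn n)) atTop (nhds (hZ.toLp Z)) := by
    intro Z Zn hZ hZn hZc
    rw [tendsto_iff_norm_sub_tendsto_zero]
    have hnorm : ∀ n, ‖(hZn n).toLp (Zn n) - hZ.toLp Z‖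
        = (eLpNorm (fun ω => Zn n ω - Z ω) 2 P).toReal := by
      intro n
      rw [← MemLp.toLp_sub (hZn n) hZ, Lp.norm_toLp]
      rfl
    simp only [hnorm]
    have := (ENNReal.tendsto_toReal (a := (0:ENNReal)) (by simp)).comp hZc
    simpa [Function.comp_def] using this
  have hXt := key X Xn hX hXn hXc
  have hYt := key Y Yn hY hYn hYc
  have h := hXt.inner (𝕜 := ℝ) hYt
  have hinner : ∀ (f g : Ω → ℝ) (hf : MemLp f 2 P) (hg : MemLp g 2 P),
      (inner ℝ (hf.toLp f) (hg.toLp g) : ℝ) = ∫ ω, f ω * g ω ∂P := by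
    intro f g hf hg
    rw [L2.inner_def]
    refine integral_congr_ae ?_
    filter_upwards [hf.coeFn_toLp, hg.coeFn_toLp] with ω h1 h2
    simp [h1, h2, mul_comm]
  simp only [hinner] at h
  exact h


variable {Ω : Type*} [MeasurableSpace Ω]

/-- Truncated MA coefficients as random variables. -/
noncomputable def coefc (φ σ : Ω → ℝ) (ℓ : ℕ) : Ω → ℝ := fun ω => σ ω * b ℓ (φ ω)

/-- Truncated moving-average representation. -/
noncomputable def Xtr (φ σ : Ω → ℝ) (ε : ℤ → Ω → ℝ) (s : ℤ) (M : ℕ) : Ω → ℝ :=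
  fun ω => ∑ ℓ ∈ Finset.range (M+1), coefc φ σ ℓ ω * ε (s - (ℓ:ℤ)) ω

lemma Xtr_eq (φ σ : Ω → ℝ) (ε : ℤ → Ω → ℝ) (s : ℤ) (M : ℕ) (ω : Ω) :
    Xtr φ σ ε s M ω
      = σ ω * (ε s ω -
          (1 - φ ω) * ∑ ℓ ∈ Finset.range M, φ ω ^ ℓ * ε (s - ((ℓ:ℤ)+1)) ω) := by
  unfold Xtr coefc
  rw [Finset.sum_range_succ']
  have h1 : ∀ ℓ ∈ Finset.range M,
      σ ω * b (ℓ+1) (φ ω) * ε (s - ((ℓ+1 : ℕ) : ℤ)) ω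
        = -(σ ω * ((1 - φ ω) * (φ ω ^ ℓ * ε (s - ((ℓ:ℤ)+1)) ω))) := by
    intro ℓ _
    have hc : ((ℓ+1 : ℕ) : ℤ) = (ℓ:ℤ)+1 := by push_cast; ring
    rw [hc, show b (ℓ+1) (φ ω) = -((1 - φ ω) * φ ω ^ ℓ) from rfl]
    ring
  rw [Finset.sum_congr rfl h1]
  rw [Finset.sum_neg_distrib, ← Finset.mul_sum, ← Finset.mul_sum]
  simp only [show b 0 (φ ω) = 1 from rfl, Nat.cast_zero, sub_zero]
  ring

end HetAR1Aux
section
open MeasureTheory ProbabilityTheory Filter HetAR1Aux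

variable {Ω : Type*} [MeasurableSpace Ω]

theorem HetAR1Aux.main_aux (P : Measure Ω) [IsProbabilityMeasure P]
    (φ σ : Ω → ℝ) (ε : ℤ → Ω → ℝ) (ε₀ : ℝ) (hε₀ : 0 < ε₀)
    (hφm : Measurable φ) (hφbd : ∀ᵐ ω ∂P, -1 + ε₀ ≤ φ ω ∧ φ ω ≤ 1)
    (hσm : Measurable σ) (hσ0 : ∀ ω, 0 ≤ σ ω)
    (hσ2 : Integrable (fun ω => (σ ω) ^ 2) P)
    (hεmeas : ∀ ℓ : ℤ, Measurable (ε ℓ))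
    (hε2 : ∀ ℓ : ℤ, MemLp (ε ℓ) 2 P)
    (hεmean : ∀ ℓ : ℤ, ∫ ω, ε ℓ ω ∂P = 0)
    (hεvar : ∀ ℓ : ℤ, ∫ ω, (ε ℓ ω) ^ 2 ∂P = 1)
    (hindep : iIndepFun (m := HetAR1.instMeasurableSpaceCodomain) (HetAR1.family φ σ ε) P)
    (hφσ : IndepFun φ σ P)
    (Δy : ℤ → Ω → ℝ)
    (hΔ2 : ∀ t : ℤ, MemLp (Δy t) 2 P)
    (hΔL2 : ∀ t : ℤ, Tendsto (fun M : ℕ =>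
        eLpNorm (fun ω => Xtr φ σ ε t M ω - Δy t ω) 2 P) atTop (nhds 0)) :
    ∀ t : ℤ,
      (∫ ω, φ ω ∂P) *
          ((∫ ω, (Δy t ω) ^ 2 ∂P) + ∫ ω, Δy t ω * Δy (t - 1) ω ∂P) =
        (∫ ω, (Δy t ω) ^ 2 ∂P) + 2 * (∫ ω, Δy t ω * Δy (t - 1) ω ∂P) +
          ∫ ω, Δy t ω * Δy (t - 2) ω ∂P := by
  intro t
  classical
  have hφbd' : ∀ᵐ ω ∂P, -1 ≤ φ ω ∧ φ ω ≤ 1 :=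
    hφbd.mono fun ω h => ⟨by linarith [h.1], h.2⟩
  -- measurability of the family
  have hfam_meas : ∀ i, Measurable (HetAR1.family φ σ ε i) := by
    intro i
    cases i with
    | none => exact hφm.prodMk hσm
    | some ℓ => exact hεmeas ℓ
  have hcmeas : ∀ ℓ, Measurable (coefc φ σ ℓ) :=
    fun ℓ => hσm.mul ((measurable_b ℓ).comp hφm)
  -- independence facts
  have hpair : ∀ i j : ℤ, IndepFun (fun ω => (φ ω, σ ω)) (fun ω => (ε i ω, ε j ω)) P := by
    intro i j
    exact (hindep.indepFun_prodMk hfam_meas (some i) (some j) none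
      (by simp) (by simp)).symm
  have hI1 : ∀ (ℓ k : ℕ) (i j : ℤ),
      IndepFun (fun ω => coefc φ σ ℓ ω * coefc φ σ k ω) (fun ω => ε i ω * ε j ω) P := by
    intro ℓ k i j
    exact (hpair i j).comp
      (((measurable_snd.mul ((measurable_b ℓ).comp measurable_fst))).mul
        ((measurable_snd.mul ((measurable_b k).comp measurable_fst))))
      (measurable_fst.mul measurable_snd)
  have hI2 : ∀ i j : ℤ, i ≠ j → IndepFun (ε i) (ε j) P := by
    intro i j hij
    exact hindep.indepFun (show (some i : Option ℤ) ≠ some j by simpa)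
  -- integrability facts
  have hcbd : ∀ (ℓ k : ℕ), ∀ᵐ ω ∂P, ‖coefc φ σ ℓ ω * coefc φ σ k ω‖ ≤ 4 * σ ω ^ 2 := by
    intro ℓ k
    filter_upwards [hφbd'] with ω h
    have hb1 := b_bound h.1 h.2 ℓ
    have hb2 := b_bound h.1 h.2 k
    have hσω := hσ0 ω
    have hb1' := abs_nonneg (b ℓ (φ ω))
    have hb2' := abs_nonneg (b k (φ ω))
    calc ‖coefc φ σ ℓ ω * coefc φ σ k ω‖
        = (σ ω * σ ω) * (|b ℓ (φ ω)| * |b k (φ ω)|) := by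
          simp only [coefc, Real.norm_eq_abs, abs_mul, abs_of_nonneg hσω]; ring
      _ ≤ (σ ω * σ ω) * (2 * 2) := by
          refine mul_le_mul_of_nonneg_left ?_ (mul_nonneg hσω hσω)
          exact mul_le_mul hb1 hb2 hb2' (by norm_num)
      _ = 4 * σ ω ^ 2 := by ring
  have hcint : ∀ ℓ k : ℕ, Integrable (fun ω => coefc φ σ ℓ ω * coefc φ σ k ω) P := by
    intro ℓ k
    exact Integrable.mono' (hσ2.const_mul 4)
      ((hcmeas ℓ).mul (hcmeas k)).aestronglyMeasurable (hcbd ℓ k)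
  have hεint : ∀ i j : ℤ, Integrable (fun ω => ε i ω * ε j ω) P := by
    intro i j
    have h : MemLp (ε i • ε j) 1 P := (hε2 j).smul (hε2 i) (hpqr := ⟨by simp [one_div, ENNReal.inv_two_add_inv_two]⟩)
    rw [← memLp_one_iff_integrable]
    exact h
  have hterm_int : ∀ (ℓ k : ℕ) (i j : ℤ),
      Integrable (fun ω => (coefc φ σ ℓ ω * ε i ω) * (coefc φ σ k ω * ε j ω)) P := by
    intro ℓ k i j
    have h := (hI1 ℓ k i j).integrable_mul (hcint ℓ k) (hεint i j)
    have e : (fun ω => (coefc φ σ ℓ ω * ε i ω) * (coefc φ σ k ω * ε j ω))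
        = (fun ω => coefc φ σ ℓ ω * coefc φ σ k ω) * (fun ω => ε i ω * ε j ω) := by
      funext ω; simp only [Pi.mul_apply]; ring
    rw [e]; exact h
  -- MemLp of truncations
  have hXmem : ∀ (s : ℤ) (M : ℕ), MemLp (Xtr φ σ ε s M) 2 P := by
    intro s M
    unfold Xtr
    refine memLp_finset_sum _ fun ℓ _ => ?_
    have hmeas : AEStronglyMeasurable (fun ω => coefc φ σ ℓ ω * ε (s - (ℓ:ℤ)) ω) P :=
      ((hcmeas ℓ).mul (hεmeas _)).aestronglyMeasurable
    rw [memLp_two_iff_integrable_sq hmeas]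
    have h := hterm_int ℓ ℓ (s - ℓ) (s - ℓ)
    have e : (fun ω => (coefc φ σ ℓ ω * ε (s - (ℓ:ℤ)) ω) ^ 2)
        = (fun ω => (coefc φ σ ℓ ω * ε (s-(ℓ:ℤ)) ω) * (coefc φ σ ℓ ω * ε (s-(ℓ:ℤ)) ω)) := by
      funext ω; ring
    rw [e]; exact h
  -- term values
  have hεval : ∀ i j : ℤ, ∫ ω, ε i ω * ε j ω ∂P = (if i = j then 1 else 0) := by
    intro i j
    by_cases hij : i = j
    · subst hij
      rw [if_pos rfl, ← hεvar i]
      exact integral_congr_ae (Filter.Eventually.of_forall fun ω => by ring)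
    · rw [if_neg hij]
      have h := (hI2 i j hij).integral_fun_mul_eq_mul_integral (hεmeas i).aestronglyMeasurable
        (hεmeas j).aestronglyMeasurable
      rw [h, hεmean i, hεmean j, mul_zero]
  have hcval : ∀ ℓ k : ℕ, ∫ ω, coefc φ σ ℓ ω * coefc φ σ k ω ∂P
      = (∫ ω, σ ω ^ 2 ∂P) * ∫ ω, b ℓ (φ ω) * b k (φ ω) ∂P := by
    intro ℓ k
    have hind : IndepFun (fun ω => σ ω ^ 2) (fun ω => b ℓ (φ ω) * b k (φ ω)) P :=
      hφσ.symm.comp (measurable_id.pow_const 2) ((measurable_b ℓ).mul (measurable_b k))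
    have h := hind.integral_fun_mul_eq_mul_integral (hσm.pow_const 2).aestronglyMeasurable
      (((measurable_b ℓ).comp hφm).mul ((measurable_b k).comp hφm)).aestronglyMeasurable
    rw [← h]
    exact integral_congr_ae (Filter.Eventually.of_forall fun ω => by
      simp only [coefc]; ring)
  have hval : ∀ (ℓ k : ℕ) (i j : ℤ),
      ∫ ω, (coefc φ σ ℓ ω * ε i ω) * (coefc φ σ k ω * ε j ω) ∂P
        = ((∫ ω, σ ω ^ 2 ∂P) * ∫ ω, b ℓ (φ ω) * b k (φ ω) ∂P) * (if i = j then 1 else 0) := by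
    intro ℓ k i j
    have h := (hI1 ℓ k i j).integral_fun_mul_eq_mul_integral
      ((hcmeas ℓ).mul (hcmeas k)).aestronglyMeasurable
      ((hεmeas i).mul (hεmeas j)).aestronglyMeasurable
    rw [← hcval, ← hεval, ← h]
    exact integral_congr_ae (Filter.Eventually.of_forall fun ω => by ring)
  -- integrability of products of b's
  have hbint : ∀ i k : ℕ, Integrable (fun ω => b i (φ ω) * b k (φ ω)) P := by
    intro i k
    refine Integrable.mono' (integrable_const 4)
      (((measurable_b i).comp hφm).mul ((measurable_b k).comp hφm)).aestronglyMeasurable ?_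
    filter_upwards [hφbd'] with ω h
    have hb1 := b_bound h.1 h.2 i
    have hb2 := b_bound h.1 h.2 k
    calc ‖b i (φ ω) * b k (φ ω)‖ = |b i (φ ω)| * |b k (φ ω)| := by
          rw [Real.norm_eq_abs, abs_mul]
      _ ≤ 2 * 2 := mul_le_mul hb1 hb2 (abs_nonneg _) (by norm_num)
      _ = 4 := by norm_num
  -- the covariance of truncations
  have hcov : ∀ (M d : ℕ), d ≤ M →
      ∫ ω, Xtr φ σ ε t M ω * Xtr φ σ ε (t - (d:ℤ)) M ω ∂P
        = (∫ ω, σ ω ^ 2 ∂P) *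
            ∫ ω, (∑ k ∈ Finset.range (M+1-d), b (k+d) (φ ω) * b k (φ ω)) ∂P := by
    intro M d hdM
    have e1 : (fun ω => Xtr φ σ ε t M ω * Xtr φ σ ε (t - (d:ℤ)) M ω)
        = fun ω => ∑ ℓ ∈ Finset.range (M+1), ∑ k ∈ Finset.range (M+1),
            (coefc φ σ ℓ ω * ε (t - (ℓ:ℤ)) ω) * (coefc φ σ k ω * ε (t - (d:ℤ) - (k:ℤ)) ω) := by
      funext ω
      exact Finset.sum_mul_sum _ _ _ _
    rw [e1]
    rw [integral_finset_sum _ (fun ℓ _ => integrable_finset_sum _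
      (fun k _ => hterm_int ℓ k (t - (ℓ:ℤ)) (t - (d:ℤ) - (k:ℤ))))]
    have e2 : ∀ ℓ ∈ Finset.range (M+1),
        ∫ ω, (∑ k ∈ Finset.range (M+1),
            (coefc φ σ ℓ ω * ε (t - (ℓ:ℤ)) ω) * (coefc φ σ k ω * ε (t - (d:ℤ) - (k:ℤ)) ω)) ∂P
          = ∑ k ∈ Finset.range (M+1),
              (if ℓ = k + d then
                (∫ ω, σ ω ^ 2 ∂P) * ∫ ω, b ℓ (φ ω) * b k (φ ω) ∂P else 0) := by
      intro ℓ _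
      rw [integral_finset_sum _ (fun k _ => hterm_int ℓ k (t - (ℓ:ℤ)) (t - (d:ℤ) - (k:ℤ)))]
      refine Finset.sum_congr rfl fun k _ => ?_
      rw [hval]
      by_cases h : ℓ = k + d
      · have hidx : (t - (ℓ:ℤ)) = t - (d:ℤ) - (k:ℤ) := by subst h; push_cast; ring
        rw [if_pos h, if_pos hidx, mul_one]
      · have hidx : (t - (ℓ:ℤ)) ≠ t - (d:ℤ) - (k:ℤ) := by
          intro hc
          apply h
          omega
        rw [if_neg h, if_neg hidx, mul_zero]
    rw [Finset.sum_congr rfl e2]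
    rw [Finset.sum_comm]
    have e3 : ∀ k ∈ Finset.range (M+1),
        (∑ ℓ ∈ Finset.range (M+1), if ℓ = k + d then
            (∫ ω, σ ω ^ 2 ∂P) * ∫ ω, b ℓ (φ ω) * b k (φ ω) ∂P else 0)
          = (if k + d ∈ Finset.range (M+1) then
              (∫ ω, σ ω ^ 2 ∂P) * ∫ ω, b (k+d) (φ ω) * b k (φ ω) ∂P else 0) := by
      intro k _
      exact Finset.sum_ite_eq' (Finset.range (M+1)) (k+d)
        (fun ℓ => (∫ ω, σ ω ^ 2 ∂P) * ∫ ω, b ℓ (φ ω) * b k (φ ω) ∂P)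
    rw [Finset.sum_congr rfl e3]
    rw [← Finset.sum_filter]
    have e4 : (Finset.range (M+1)).filter (fun k => k + d ∈ Finset.range (M+1))
        = Finset.range (M+1-d) := by
      ext k
      simp only [Finset.mem_filter, Finset.mem_range]
      omega
    rw [e4, ← Finset.mul_sum]
    congr 1
    rw [integral_finset_sum _ (fun k _ => hbint (k+d) k)]
  -- limits of covariances along truncation
  have hconv : ∀ s : ℤ, Tendsto (fun M => ∫ ω, Xtr φ σ ε t M ω * Xtr φ σ ε s M ω ∂P)
      atTop (nhds (∫ ω, Δy t ω * Δy s ω ∂P)) := fun s =>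
    tendsto_integral_mul_of_L2 (hΔ2 t) (hΔ2 s) (hXmem t) (hXmem s) (hΔL2 t) (hΔL2 s)
  -- instantiated covariances at M = N+2
  have hγ0M : ∀ N : ℕ, ∫ ω, Xtr φ σ ε t (N+2) ω * Xtr φ σ ε t (N+2) ω ∂P
      = (∫ ω, σ ω ^ 2 ∂P) * ∫ ω, (∑ k ∈ Finset.range (N+3), b k (φ ω) * b k (φ ω)) ∂P := by
    intro N
    have h := hcov (N+2) 0 (by omega)
    rw [show N+2+1-0 = N+3 from by omega] at h
    simpa using h
  have hγ1M : ∀ N : ℕ, ∫ ω, Xtr φ σ ε t (N+2) ω * Xtr φ σ ε (t-1) (N+2) ω ∂P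
      = (∫ ω, σ ω ^ 2 ∂P) * ∫ ω, (∑ k ∈ Finset.range (N+2), b (k+1) (φ ω) * b k (φ ω)) ∂P := by
    intro N
    have h := hcov (N+2) 1 (by omega)
    rw [show N+2+1-1 = N+2 from by omega] at h
    simpa using h
  have hγ2M : ∀ N : ℕ, ∫ ω, Xtr φ σ ε t (N+2) ω * Xtr φ σ ε (t-2) (N+2) ω ∂P
      = (∫ ω, σ ω ^ 2 ∂P) * ∫ ω, (∑ k ∈ Finset.range (N+1), b (k+2) (φ ω) * b k (φ ω)) ∂P := by
    intro N
    have h := hcov (N+2) 2 (by omega)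
    rw [show N+2+1-2 = N+1 from by omega] at h
    simpa using h
  -- integrability of auxiliary functions
  have hφint : Integrable φ P := by
    refine Integrable.mono' (integrable_const 1) hφm.aestronglyMeasurable ?_
    filter_upwards [hφbd'] with ω h
    rw [Real.norm_eq_abs, abs_le]; exact ⟨h.1, h.2⟩
  have hrem1int : ∀ N : ℕ, Integrable (fun ω => (1 - φ ω) * φ ω ^ (2*N+3)) P := by
    intro N
    refine Integrable.mono' (integrable_const 2)
      ((measurable_const.sub hφm).mul (hφm.pow_const _)).aestronglyMeasurable ?_
    filter_upwards [hφbd'] with ω h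
    have h1 : |1 - φ ω| ≤ 2 := by rw [abs_le]; constructor <;> [linarith [h.2]; linarith [h.1]]
    have h2 : |φ ω ^ (2*N+3)| ≤ 1 := by
      rw [abs_pow]; exact pow_le_one₀ (abs_nonneg _) (abs_le.2 ⟨h.1, h.2⟩)
    calc ‖(1 - φ ω) * φ ω ^ (2*N+3)‖ = |1 - φ ω| * |φ ω ^ (2*N+3)| := by
          rw [Real.norm_eq_abs, abs_mul]
      _ ≤ 2 * 1 := mul_le_mul h1 h2 (abs_nonneg _) (by norm_num)
      _ = 2 := by norm_num
  have hrem2int : ∀ N : ℕ, Integrable (fun ω => (1 - φ ω) * (1 + φ ω) * φ ω ^ (2*N+2)) P := by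
    intro N
    refine Integrable.mono' (integrable_const 4)
      (((measurable_const.sub hφm).mul (measurable_const.add hφm)).mul
        (hφm.pow_const _)).aestronglyMeasurable ?_
    filter_upwards [hφbd'] with ω h
    have h1 : |1 - φ ω| ≤ 2 := by rw [abs_le]; constructor <;> [linarith [h.2]; linarith [h.1]]
    have h1' : |1 + φ ω| ≤ 2 := by rw [abs_le]; constructor <;> [linarith [h.1]; linarith [h.2]]
    have h2 : |φ ω ^ (2*N+2)| ≤ 1 := by
      rw [abs_pow]; exact pow_le_one₀ (abs_nonneg _) (abs_le.2 ⟨h.1, h.2⟩)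
    calc ‖(1 - φ ω) * (1 + φ ω) * φ ω ^ (2*N+2)‖
        = |1 - φ ω| * |1 + φ ω| * |φ ω ^ (2*N+2)| := by
          rw [Real.norm_eq_abs, abs_mul, abs_mul]
      _ ≤ 2 * 2 * 1 := by
          refine mul_le_mul (mul_le_mul h1 h1' (abs_nonneg _) (by norm_num)) h2
            (abs_nonneg _) (by positivity)
      _ = 4 := by norm_num
  -- key integral identities from the polynomial identities
  have hId1 : ∀ N : ℕ,
      (∫ ω, (∑ k ∈ Finset.range (N+3), b k (φ ω) * b k (φ ω)) ∂P)
        + (∫ ω, (∑ k ∈ Finset.range (N+2), b (k+1) (φ ω) * b k (φ ω)) ∂P)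
      = 1 - ∫ ω, (1 - φ ω) * φ ω ^ (2*N+3) ∂P := by
    intro N
    have i0 : Integrable (fun ω => ∑ k ∈ Finset.range (N+3), b k (φ ω) * b k (φ ω)) P :=
      integrable_finset_sum _ (fun k _ => hbint k k)
    have i1 : Integrable (fun ω => ∑ k ∈ Finset.range (N+2), b (k+1) (φ ω) * b k (φ ω)) P :=
      integrable_finset_sum _ (fun k _ => hbint (k+1) k)
    rw [← integral_add i0 i1]
    have e : ∀ ω : Ω, ((∑ k ∈ Finset.range (N+3), b k (φ ω) * b k (φ ω))
        + ∑ k ∈ Finset.range (N+2), b (k+1) (φ ω) * b k (φ ω))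
        = 1 - (1 - φ ω) * φ ω ^ (2*N+3) := fun ω => key1 (φ ω) N
    rw [integral_congr_ae (Filter.Eventually.of_forall e),
      integral_sub (integrable_const 1) (hrem1int N)]
    simp
  have hId2 : ∀ N : ℕ,
      (∫ ω, (∑ k ∈ Finset.range (N+3), b k (φ ω) * b k (φ ω)) ∂P)
        + 2 * (∫ ω, (∑ k ∈ Finset.range (N+2), b (k+1) (φ ω) * b k (φ ω)) ∂P)
        + (∫ ω, (∑ k ∈ Finset.range (N+1), b (k+2) (φ ω) * b k (φ ω)) ∂P)
      = (∫ ω, φ ω ∂P) - ∫ ω, (1 - φ ω) * (1 + φ ω) * φ ω ^ (2*N+2) ∂P := by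
    intro N
    have i0 : Integrable (fun ω => ∑ k ∈ Finset.range (N+3), b k (φ ω) * b k (φ ω)) P :=
      integrable_finset_sum _ (fun k _ => hbint k k)
    have i1 : Integrable (fun ω => ∑ k ∈ Finset.range (N+2), b (k+1) (φ ω) * b k (φ ω)) P :=
      integrable_finset_sum _ (fun k _ => hbint (k+1) k)
    have i2 : Integrable (fun ω => ∑ k ∈ Finset.range (N+1), b (k+2) (φ ω) * b k (φ ω)) P :=
      integrable_finset_sum _ (fun k _ => hbint (k+2) k)
    have s1 : ∫ ω, 2 * (∑ k ∈ Finset.range (N+2), b (k+1) (φ ω) * b k (φ ω)) ∂P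
        = 2 * ∫ ω, (∑ k ∈ Finset.range (N+2), b (k+1) (φ ω) * b k (φ ω)) ∂P :=
      integral_const_mul 2 _
    have s2 : ∫ ω, ((∑ k ∈ Finset.range (N+3), b k (φ ω) * b k (φ ω))
          + 2 * (∑ k ∈ Finset.range (N+2), b (k+1) (φ ω) * b k (φ ω))) ∂P
        = (∫ ω, (∑ k ∈ Finset.range (N+3), b k (φ ω) * b k (φ ω)) ∂P)
          + ∫ ω, 2 * (∑ k ∈ Finset.range (N+2), b (k+1) (φ ω) * b k (φ ω)) ∂P :=
      integral_add i0 (i1.const_mul 2)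
    have s3 : ∫ ω, (((∑ k ∈ Finset.range (N+3), b k (φ ω) * b k (φ ω))
          + 2 * (∑ k ∈ Finset.range (N+2), b (k+1) (φ ω) * b k (φ ω)))
          + ∑ k ∈ Finset.range (N+1), b (k+2) (φ ω) * b k (φ ω)) ∂P
        = (∫ ω, ((∑ k ∈ Finset.range (N+3), b k (φ ω) * b k (φ ω))
          + 2 * (∑ k ∈ Finset.range (N+2), b (k+1) (φ ω) * b k (φ ω))) ∂P)
          + ∫ ω, (∑ k ∈ Finset.range (N+1), b (k+2) (φ ω) * b k (φ ω)) ∂P :=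
      integral_add (i0.add (i1.const_mul 2)) i2
    rw [← s1, ← s2, ← s3]
    have e : ∀ ω : Ω, (((∑ k ∈ Finset.range (N+3), b k (φ ω) * b k (φ ω))
          + 2 * (∑ k ∈ Finset.range (N+2), b (k+1) (φ ω) * b k (φ ω)))
          + ∑ k ∈ Finset.range (N+1), b (k+2) (φ ω) * b k (φ ω))
        = φ ω - (1 - φ ω) * (1 + φ ω) * φ ω ^ (2*N+2) := by
      intro ω
      have h := key2 (φ ω) N
      nlinarith [h]
    rw [integral_congr_ae (Filter.Eventually.of_forall e),
      integral_sub hφint (hrem2int N)]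
  -- dominated convergence for the remainders
  have hbnd1 : ∀ N : ℕ, ∀ᵐ ω ∂P, ‖(1 - φ ω) * φ ω ^ (2*N+3)‖ ≤ 2 := by
    intro N
    filter_upwards [hφbd'] with ω h
    have h1 : |1 - φ ω| ≤ 2 := by rw [abs_le]; constructor <;> [linarith [h.2]; linarith [h.1]]
    have h2 : |φ ω ^ (2*N+3)| ≤ 1 := by
      rw [abs_pow]; exact pow_le_one₀ (abs_nonneg _) (abs_le.2 ⟨h.1, h.2⟩)
    calc ‖(1 - φ ω) * φ ω ^ (2*N+3)‖ = |1 - φ ω| * |φ ω ^ (2*N+3)| := by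
          rw [Real.norm_eq_abs, abs_mul]
      _ ≤ 2 * 1 := mul_le_mul h1 h2 (abs_nonneg _) (by norm_num)
      _ = 2 := by norm_num
  have hbnd2 : ∀ N : ℕ, ∀ᵐ ω ∂P, ‖(1 - φ ω) * (1 + φ ω) * φ ω ^ (2*N+2)‖ ≤ 4 := by
    intro N
    filter_upwards [hφbd'] with ω h
    have h1 : |1 - φ ω| ≤ 2 := by rw [abs_le]; constructor <;> [linarith [h.2]; linarith [h.1]]
    have h1' : |1 + φ ω| ≤ 2 := by rw [abs_le]; constructor <;> [linarith [h.1]; linarith [h.2]]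
    have h2 : |φ ω ^ (2*N+2)| ≤ 1 := by
      rw [abs_pow]; exact pow_le_one₀ (abs_nonneg _) (abs_le.2 ⟨h.1, h.2⟩)
    calc ‖(1 - φ ω) * (1 + φ ω) * φ ω ^ (2*N+2)‖
        = |1 - φ ω| * |1 + φ ω| * |φ ω ^ (2*N+2)| := by
          rw [Real.norm_eq_abs, abs_mul, abs_mul]
      _ ≤ 2 * 2 * 1 :=
          mul_le_mul (mul_le_mul h1 h1' (abs_nonneg _) (by norm_num)) h2
            (abs_nonneg _) (by positivity)
      _ = 4 := by norm_num
  have hexplim : ∀ (c : ℕ), Tendsto (fun N : ℕ => 2*N+c) atTop atTop :=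
    fun c => tendsto_atTop_mono (fun n => by simp only [id_eq]; omega) tendsto_id
  have hrem1lim : Tendsto (fun N => ∫ ω, (1 - φ ω) * φ ω ^ (2*N+3) ∂P) atTop (nhds 0) := by
    have h := tendsto_integral_of_dominated_convergence (μ := P)
      (F := fun N ω => (1 - φ ω) * φ ω ^ (2*N+3)) (f := fun _ => (0:ℝ)) (fun _ => (2:ℝ))
      (fun N => ((measurable_const.sub hφm).mul (hφm.pow_const _)).aestronglyMeasurable)
      (integrable_const 2) hbnd1 ?_
    · simpa using h
    · filter_upwards [hφbd] with ω h
      rcases eq_or_lt_of_le h.2 with heq | hlt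
      · simpa [← heq] using (tendsto_const_nhds :
          Tendsto (fun _ : ℕ => (0:ℝ)) atTop (nhds 0))
      · have habs : |φ ω| < 1 := abs_lt.2 ⟨by linarith [h.1, hε₀], hlt⟩
        have h3 : Tendsto (fun n : ℕ => φ ω ^ n) atTop (nhds 0) :=
          tendsto_pow_atTop_nhds_zero_of_abs_lt_one habs
        have h5 := (h3.comp (hexplim 3)).const_mul (1 - φ ω)
        simpa using h5
  have hrem2lim : Tendsto (fun N => ∫ ω, (1 - φ ω) * (1 + φ ω) * φ ω ^ (2*N+2) ∂P)
      atTop (nhds 0) := by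
    have h := tendsto_integral_of_dominated_convergence (μ := P)
      (F := fun N ω => (1 - φ ω) * (1 + φ ω) * φ ω ^ (2*N+2)) (f := fun _ => (0:ℝ))
      (fun _ => (4:ℝ))
      (fun N => (((measurable_const.sub hφm).mul (measurable_const.add hφm)).mul
        (hφm.pow_const _)).aestronglyMeasurable)
      (integrable_const 4) hbnd2 ?_
    · simpa using h
    · filter_upwards [hφbd] with ω h
      rcases eq_or_lt_of_le h.2 with heq | hlt
      · simpa [← heq] using (tendsto_const_nhds :
          Tendsto (fun _ : ℕ => (0:ℝ)) atTop (nhds 0))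
      · have habs : |φ ω| < 1 := abs_lt.2 ⟨by linarith [h.1, hε₀], hlt⟩
        have h3 : Tendsto (fun n : ℕ => φ ω ^ n) atTop (nhds 0) :=
          tendsto_pow_atTop_nhds_zero_of_abs_lt_one habs
        have h5 := (h3.comp (hexplim 2)).const_mul ((1 - φ ω) * (1 + φ ω))
        simpa [mul_assoc] using h5
  -- identify the limits
  have hfun1 : ∀ N : ℕ, (∫ ω, Xtr φ σ ε t (N+2) ω * Xtr φ σ ε t (N+2) ω ∂P)
      + (∫ ω, Xtr φ σ ε t (N+2) ω * Xtr φ σ ε (t-1) (N+2) ω ∂P)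
      = (∫ ω, σ ω ^ 2 ∂P) * (1 - ∫ ω, (1 - φ ω) * φ ω ^ (2*N+3) ∂P) := by
    intro N
    rw [hγ0M N, hγ1M N, ← mul_add, hId1 N]
  have hfun2 : ∀ N : ℕ, (∫ ω, Xtr φ σ ε t (N+2) ω * Xtr φ σ ε t (N+2) ω ∂P)
      + 2 * (∫ ω, Xtr φ σ ε t (N+2) ω * Xtr φ σ ε (t-1) (N+2) ω ∂P)
      + (∫ ω, Xtr φ σ ε t (N+2) ω * Xtr φ σ ε (t-2) (N+2) ω ∂P)
      = (∫ ω, σ ω ^ 2 ∂P) *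
          ((∫ ω, φ ω ∂P) - ∫ ω, (1 - φ ω) * (1 + φ ω) * φ ω ^ (2*N+2) ∂P) := by
    intro N
    rw [hγ0M N, hγ1M N, hγ2M N, ← mul_assoc, mul_comm (2:ℝ), mul_assoc, ← mul_add, ← mul_add,
      hId2 N]
  have hA : Tendsto (fun N : ℕ => ∫ ω, Xtr φ σ ε t (N+2) ω * Xtr φ σ ε t (N+2) ω ∂P)
      atTop (nhds (∫ ω, Δy t ω * Δy t ω ∂P)) := (hconv t).comp (tendsto_add_atTop_nat 2)
  have hB : Tendsto (fun N : ℕ => ∫ ω, Xtr φ σ ε t (N+2) ω * Xtr φ σ ε (t-1) (N+2) ω ∂P)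
      atTop (nhds (∫ ω, Δy t ω * Δy (t-1) ω ∂P)) := (hconv (t-1)).comp (tendsto_add_atTop_nat 2)
  have hC : Tendsto (fun N : ℕ => ∫ ω, Xtr φ σ ε t (N+2) ω * Xtr φ σ ε (t-2) (N+2) ω ∂P)
      atTop (nhds (∫ ω, Δy t ω * Δy (t-2) ω ∂P)) := (hconv (t-2)).comp (tendsto_add_atTop_nat 2)
  have h1 : (∫ ω, Δy t ω * Δy t ω ∂P) + (∫ ω, Δy t ω * Δy (t-1) ω ∂P)
      = ∫ ω, σ ω ^ 2 ∂P := by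
    have hL := (hA.add hB).congr hfun1
    have hT : Tendsto (fun N => (∫ ω, σ ω ^ 2 ∂P) *
        (1 - ∫ ω, (1 - φ ω) * φ ω ^ (2*N+3) ∂P)) atTop
        (nhds ((∫ ω, σ ω ^ 2 ∂P) * (1 - 0))) :=
      (tendsto_const_nhds.sub hrem1lim).const_mul _
    have := tendsto_nhds_unique hL hT
    rw [this]; ring
  have h2 : (∫ ω, Δy t ω * Δy t ω ∂P) + 2 * (∫ ω, Δy t ω * Δy (t-1) ω ∂P)
      + (∫ ω, Δy t ω * Δy (t-2) ω ∂P)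
      = (∫ ω, σ ω ^ 2 ∂P) * ∫ ω, φ ω ∂P := by
    have hL := ((hA.add (hB.const_mul 2)).add hC).congr hfun2
    have hT : Tendsto (fun N => (∫ ω, σ ω ^ 2 ∂P) *
        ((∫ ω, φ ω ∂P) - ∫ ω, (1 - φ ω) * (1 + φ ω) * φ ω ^ (2*N+2) ∂P)) atTop
        (nhds ((∫ ω, σ ω ^ 2 ∂P) * ((∫ ω, φ ω ∂P) - 0))) :=
      (tendsto_const_nhds.sub hrem2lim).const_mul _
    have := tendsto_nhds_unique hL hT
    rw [this]; ring
  -- finish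
  have hsq : ∫ ω, (Δy t ω)^2 ∂P = ∫ ω, Δy t ω * Δy t ω ∂P :=
    integral_congr_ae (Filter.Eventually.of_forall fun ω => by ring)
  rw [hsq, h1, h2]
  exact mul_comm _ _
end


/-- (Moment condition underlying the HetroGMM estimator of the first moment)
For every `t ∈ ℤ`,
`E(φ) (E((Δy_t)²) + E(Δy_t Δy_{t−1})) = E((Δy_t)²) + 2 E(Δy_t Δy_{t−1}) + E(Δy_t Δy_{t−2})`. -/
theorem hetroGMM_moment_condition_first
    {Ω : Type*} [MeasurableSpace Ω] (P : Measure Ω) [IsProbabilityMeasure P]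
    (φ σ : Ω → ℝ) (ε : ℤ → Ω → ℝ) (ε₀ : ℝ) (hε₀ : 0 < ε₀)
    (hφm : Measurable φ) (hφbd : ∀ᵐ ω ∂P, -1 + ε₀ ≤ φ ω ∧ φ ω ≤ 1)
    (hσm : Measurable σ) (hσ0 : ∀ ω, 0 ≤ σ ω)
    (hσ2 : Integrable (fun ω => (σ ω) ^ 2) P)
    (hε2 : ∀ ℓ : ℤ, MemLp (ε ℓ) 2 P)
    (hεmean : ∀ ℓ : ℤ, ∫ ω, ε ℓ ω ∂P = 0)
    (hεvar : ∀ ℓ : ℤ, ∫ ω, (ε ℓ ω) ^ 2 ∂P = 1)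
    (hindep : iIndepFun (m := HetAR1.instMeasurableSpaceCodomain) (HetAR1.family φ σ ε) P)
    (hφσ : IndepFun φ σ P)
    (Δy : ℤ → Ω → ℝ)
    (hΔ2 : ∀ t : ℤ, MemLp (Δy t) 2 P)
    (hΔrep : ∀ t : ℤ, ∀ᵐ ω ∂P,
      (Summable fun ℓ : ℕ => |φ ω ^ ℓ * ε (t - ((ℓ : ℤ) + 1)) ω|) ∧
      Δy t ω = σ ω * (ε t ω -
        (1 - φ ω) * ∑' ℓ : ℕ, φ ω ^ ℓ * ε (t - ((ℓ : ℤ) + 1)) ω))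
    (hΔL2 : ∀ t : ℤ, Tendsto (fun M : ℕ =>
        eLpNorm (fun ω => σ ω * (ε t ω -
          (1 - φ ω) * ∑ ℓ ∈ Finset.range M, φ ω ^ ℓ * ε (t - ((ℓ : ℤ) + 1)) ω)
          - Δy t ω) 2 P)
      atTop (nhds 0)) :
    ∀ t : ℤ,
      (∫ ω, φ ω ∂P) *
          ((∫ ω, (Δy t ω) ^ 2 ∂P) + ∫ ω, Δy t ω * Δy (t - 1) ω ∂P) =
        (∫ ω, (Δy t ω) ^ 2 ∂P) + 2 * (∫ ω, Δy t ω * Δy (t - 1) ω ∂P) +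
          ∫ ω, Δy t ω * Δy (t - 2) ω ∂P := by
  have hεsm : ∀ ℓ : ℤ, AEStronglyMeasurable (ε ℓ) P := fun ℓ => (hε2 ℓ).1
  set ε' : ℤ → Ω → ℝ := fun ℓ => (hεsm ℓ).mk (ε ℓ) with hε'def
  have hεae : ∀ ℓ : ℤ, ε ℓ =ᵐ[P] ε' ℓ := fun ℓ => (hεsm ℓ).ae_eq_mk
  have hε'meas : ∀ ℓ : ℤ, Measurable (ε' ℓ) :=
    fun ℓ => (hεsm ℓ).stronglyMeasurable_mk.measurable
  have hε'2 : ∀ ℓ : ℤ, MemLp (ε' ℓ) 2 P := fun ℓ => (hε2 ℓ).ae_eq (hεae ℓ)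
  have hε'mean : ∀ ℓ : ℤ, ∫ ω, ε' ℓ ω ∂P = 0 := fun ℓ => by
    rw [← integral_congr_ae (hεae ℓ)]; exact hεmean ℓ
  have hε'var : ∀ ℓ : ℤ, ∫ ω, (ε' ℓ ω) ^ 2 ∂P = 1 := fun ℓ => by
    rw [← hεvar ℓ]
    refine integral_congr_ae ?_
    filter_upwards [hεae ℓ] with ω h
    rw [h]
  have hindep' : iIndepFun (m := HetAR1.instMeasurableSpaceCodomain) (HetAR1.family φ σ ε') P := by
    refine HetAR1Aux.iIndepFun_congr_ae hindep ?_
    intro i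
    cases i with
    | none => exact Filter.EventuallyEq.rfl
    | some ℓ => exact hεae ℓ
  have hΔL2' : ∀ s : ℤ, Tendsto (fun M : ℕ =>
      eLpNorm (fun ω => HetAR1Aux.Xtr φ σ ε' s M ω - Δy s ω) 2 P) atTop (nhds 0) := by
    intro s
    refine (hΔL2 s).congr fun M => ?_
    refine eLpNorm_congr_ae ?_
    have hall : ∀ᵐ ω ∂P, ∀ ℓ : ℤ, ε ℓ ω = ε' ℓ ω := (ae_all_iff).2 hεae
    filter_upwards [hall] with ω hω
    rw [HetAR1Aux.Xtr_eq]
    simp only [hω]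
  exact HetAR1Aux.main_aux P φ σ ε' ε₀ hε₀ hφm hφbd hσm hσ0 hσ2 hε'meas hε'2 hε'mean
    hε'var hindep' hφσ Δy hΔ2 hΔL2'
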